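/- Let S = ⟨qm₁,…,qm_d, pn₁,…,pn_k⟩ be a gluing of S₁ and S₂. Then the following are equivalent: (1) S is a nice gluing of S₁ and S₂ (i.e. q = a·n₁ for some 1 < a ≤ ord_{S₁}(p)) and ord_{S₂}(s+n₁) = ord_{S₂}(s)+1 for all s∈S₂ (i.e. G(S₂) is Cohen–Macaulay); (2) ord_{S₂}(q) ≤ ord_{S₁}(p) and ord_{S₂}(y + αq) = ord_{S₂}(y) + α·ord_{S₂}(q) for all y∈S₂ and all integers α ≥ 0. -/

import Mathlib

open scoped Pointwise

/-- `S ⊆ ℕ` is a numerical semigroup: it contains `0`, is closed under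
addition, and has finite complement in `ℕ`. -/
def IsNumSgp (S : Set ℕ) : Prop :=
  (0 : ℕ) ∈ S ∧ (∀ a ∈ S, ∀ b ∈ S, a + b ∈ S) ∧ {x : ℕ | x ∉ S}.Finite

/-- `nM S t` is the `t`-fold sumset of the maximal ideal `M = S \ {0}`,
with the convention `nM S 0 = S`. -/
def nM (S : Set ℕ) : ℕ → Set ℕ
  | 0 => S
  | t + 1 => (S \ {0}) + nM S t

/-- the order of `s` with respect to `S` : the largest `t` with `s ∈ tM`. -/
noncomputable def ordS (S : Set ℕ) (s : ℕ) : ℕ := sSup {t : ℕ | s ∈ nM S t}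

/-- the multiplicity of `S` : its least nonzero element. -/
noncomputable def mult (S : Set ℕ) : ℕ := sInf {x : ℕ | x ∈ S ∧ x ≠ 0}

/-- the Apéry set of `S` with respect to `x` : elements `s ∈ S` with `s - x ∉ S`. -/
def Ap (S : Set ℕ) (x : ℕ) : Set ℕ := {s : ℕ | s ∈ S ∧ ¬ ∃ t ∈ S, s = t + x}

/-- membership of an integer in (the image in `ℤ` of) `S`. -/
def zmem (S : Set ℕ) (z : ℤ) : Prop := ∃ t ∈ S, (t : ℤ) = z

/-- the Frobenius number of `S` : the largest integer not in `S`. -/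
noncomputable def Frob (S : Set ℕ) : ℤ := sSup {z : ℤ | ¬ zmem S z}

/-- `S` is symmetric: for every integer `z`, `z ∈ S` iff `F(S) - z ∉ S`. -/
def IsSymmetric (S : Set ℕ) : Prop := ∀ z : ℤ, zmem S z ↔ ¬ zmem S (Frob S - z)

/-- the set of maximal elements of `Ap S x` with respect to the order
`u ⪯ v` iff `v = u + z` for some `z ∈ S`. -/
def MaxAp (S : Set ℕ) (x : ℕ) : Set ℕ :=
  {w : ℕ | w ∈ Ap S x ∧ ∀ y ∈ Ap S x, (∃ z ∈ S, y = w + z) → y = w}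

/-- the set of maximal elements of `Ap S x` with respect to the order
`u ⪯_M v` iff `v = u + z` for some `z ∈ S` with `ord(v) = ord(u) + ord(z)`. -/
def MaxMAp (S : Set ℕ) (x : ℕ) : Set ℕ :=
  {w : ℕ | w ∈ Ap S x ∧ ∀ y ∈ Ap S x,
    (∃ z ∈ S, y = w + z ∧ ordS S y = ordS S w + ordS S z) → y = w}

/-- `S` is M-pure with respect to `x` : all maximal elements of `Ap S x`
under `⪯_M` have the same order. -/
def MPureWrt (S : Set ℕ) (x : ℕ) : Prop :=
  ∀ w ∈ MaxMAp S x, ∀ w' ∈ MaxMAp S x, ordS S w = ordS S w'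

/-- `S` is M-pure : it is M-pure with respect to its multiplicity. -/
def MPure (S : Set ℕ) : Prop := MPureWrt S (mult S)

/-- `β_i(x)` : the number of elements of `Ap S x` of order `i`. -/
noncomputable def betaS (S : Set ℕ) (x i : ℕ) : ℕ := {w ∈ Ap S x | ordS S w = i}.ncard

/-- `d(x)` : the maximal order of an element of `Ap S x`. -/
noncomputable def dS (S : Set ℕ) (x : ℕ) : ℕ := sSup (ordS S '' Ap S x)

/-- the reduction number of `S` : the least `r` with `(r+1)M = m(S) + rM`. -/
noncomputable def redNum (S : Set ℕ) : ℕ :=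
  sInf {r : ℕ | nM S (r + 1) = (fun y => mult S + y) '' nM S r}

/-- `l_x(S) = max { ord(s+x) - ord(x) - ord(s) : s ∈ S, ord(s) ≤ r }`. -/
noncomputable def lS (S : Set ℕ) (x : ℕ) : ℕ :=
  sSup {t : ℕ | ∃ s ∈ S, ordS S s ≤ redNum S ∧ t = ordS S (s + x) - ordS S x - ordS S s}

/-- the Hilbert function of `S`. -/
noncomputable def HilbS (S : Set ℕ) (t : ℕ) : ℕ := (nM S t \ nM S (t + 1)).ncard

/-- The data of a gluing `S = ⟨q m₁, …, q m_d, p n₁, …, p n_k⟩` of two numerical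
semigroups `S₁ = ⟨m₁, …, m_d⟩` and `S₂ = ⟨n₁, …, n_k⟩`, minimally generated by
`m₁ < ⋯ < m_d` and `n₁ < ⋯ < n_k`, where `p ∈ S₁ \ {m₁, …, m_d}`,
`q ∈ S₂ \ {n₁, …, n_k}` and `gcd(p, q) = 1`. -/
structure Gluing where
  d : ℕ
  k : ℕ
  hd : 0 < d
  hk : 0 < k
  m : Fin d → ℕ
  n : Fin k → ℕ
  p : ℕ
  q : ℕ
  hm : StrictMono m
  hn : StrictMono n
  hmin₁ : ∀ i, m i ∉ AddSubmonoid.closure (Set.range m \ {m i})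
  hmin₂ : ∀ j, n j ∉ AddSubmonoid.closure (Set.range n \ {n j})
  hnum₁ : IsNumSgp (AddSubmonoid.closure (Set.range m) : Set ℕ)
  hnum₂ : IsNumSgp (AddSubmonoid.closure (Set.range n) : Set ℕ)
  hp : p ∈ AddSubmonoid.closure (Set.range m)
  hq : q ∈ AddSubmonoid.closure (Set.range n)
  hpm : p ∉ Set.range m
  hqn : q ∉ Set.range n
  hpq : Nat.gcd p q = 1

/-- the numerical semigroup `S₁ = ⟨m₁, …, m_d⟩`. -/
def Gluing.S₁ (G : Gluing) : Set ℕ := (AddSubmonoid.closure (Set.range G.m) : Set ℕ)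

/-- the numerical semigroup `S₂ = ⟨n₁, …, n_k⟩`. -/
def Gluing.S₂ (G : Gluing) : Set ℕ := (AddSubmonoid.closure (Set.range G.n) : Set ℕ)

/-- the glued numerical semigroup `S = ⟨q m₁, …, q m_d, p n₁, …, p n_k⟩`. -/
def Gluing.S (G : Gluing) : Set ℕ :=
  (AddSubmonoid.closure
    ((fun x => G.q * x) '' Set.range G.m ∪ (fun x => G.p * x) '' Set.range G.n) : Set ℕ)

/-- the smallest generator `m₁` of `S₁`. -/
def Gluing.m₁ (G : Gluing) : ℕ := G.m ⟨0, G.hd⟩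

/-- the smallest generator `n₁` of `S₂`. -/
def Gluing.n₁ (G : Gluing) : ℕ := G.n ⟨0, G.hk⟩

/-- the gluing is specific if `ord_{S₂}(q) + l_q(S₂) ≤ ord_{S₁}(p)`. -/
def Gluing.Specific (G : Gluing) : Prop := ordS G.S₂ G.q + lS G.S₂ G.q ≤ ordS G.S₁ G.p

/-- the gluing is nice if `q = a n₁` for some `1 < a ≤ ord_{S₁}(p)`. -/
def Gluing.Nice (G : Gluing) : Prop := ∃ a : ℕ, 1 < a ∧ a ≤ ordS G.S₁ G.p ∧ G.q = a * G.n₁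

section Aux

variable {S : Set ℕ}

lemma nM_lb {μ : ℕ} (hμ : ∀ x ∈ S, x ≠ 0 → μ ≤ x) :
    ∀ t, ∀ x ∈ nM S t, μ * t ≤ x := by
  intro t
  induction t with
  | zero => intro x _; simp
  | succ t ih =>
    intro x hx
    rcases Set.mem_add.mp hx with ⟨a, ha, b, hb, rfl⟩
    have h1 : μ ≤ a := hμ a ha.1 (by simpa using ha.2)
    have h2 := ih b hb
    calc μ * (t + 1) = μ * t + μ := by ring
    _ ≤ b + a := Nat.add_le_add h2 h1
    _ = a + b := by ring

lemma nM_bdd (s : ℕ) : BddAbove {t : ℕ | s ∈ nM S t} := by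
  refine ⟨s, fun t ht => ?_⟩
  have := nM_lb (μ := 1) (fun x _ hx => Nat.one_le_iff_ne_zero.mpr hx) t s ht
  omega

lemma mem_nM_ordS {s : ℕ} (hs : s ∈ S) : s ∈ nM S (ordS S s) :=
  Nat.sSup_mem ⟨0, by simpa [nM] using hs⟩ (nM_bdd s)

lemma le_ordS {s t : ℕ} (h : s ∈ nM S t) : t ≤ ordS S s :=
  le_csSup (nM_bdd s) h

lemma S_add_nM (hadd : ∀ a ∈ S, ∀ b ∈ S, a + b ∈ S) :
    ∀ t, ∀ x ∈ S, ∀ y ∈ nM S t, x + y ∈ nM S t := by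
  intro t
  induction t with
  | zero => exact fun x hx y hy => hadd x hx y hy
  | succ t ih =>
    intro x hx y hy
    rcases Set.mem_add.mp hy with ⟨c, hc, e, he, rfl⟩
    exact Set.mem_add.mpr ⟨c, hc, x + e, ih x hx e he, by ring⟩

lemma nM_add (hadd : ∀ a ∈ S, ∀ b ∈ S, a + b ∈ S) :
    ∀ a b : ℕ, ∀ x ∈ nM S a, ∀ y ∈ nM S b, x + y ∈ nM S (a + b) := by
  intro a
  induction a with
  | zero => intro b x hx y hy; simpa using S_add_nM hadd b x hx y hy
  | succ a ih =>
    intro b x hx y hy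
    rcases Set.mem_add.mp hx with ⟨c, hc, e, he, rfl⟩
    have h1 : c + (e + y) ∈ nM S (a + b + 1) :=
      Set.mem_add.mpr ⟨c, hc, e + y, ih b e he y hy, rfl⟩
    have h2 : a + 1 + b = a + b + 1 := by ring
    have h3 : c + e + y = c + (e + y) := by ring
    rw [h2, h3]
    exact h1

lemma rep_mem_nM {μ : ℕ} (hμS : μ ∈ S) (hμ0 : μ ≠ 0) {y : ℕ} (hy : y ∈ S) :
    ∀ t, t * μ + y ∈ nM S t := by
  intro t
  induction t with
  | zero => simpa [nM] using hy
  | succ t ih =>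
    have : μ + (t * μ + y) ∈ nM S (t + 1) :=
      Set.mem_add.mpr ⟨μ, ⟨hμS, by simpa using hμ0⟩, t * μ + y, ih, rfl⟩
    have h2 : (t + 1) * μ + y = μ + (t * μ + y) := by ring
    rw [h2]; exact this

lemma ordS_zero (h0 : 0 ∈ S) : ordS S 0 = 0 := by
  have := nM_lb (μ := 1) (fun x _ hx => Nat.one_le_iff_ne_zero.mpr hx)
    (ordS S 0) 0 (mem_nM_ordS h0)
  omega

lemma mem_add_mul (hadd : ∀ a ∈ S, ∀ b ∈ S, a + b ∈ S) {μ : ℕ} (hμS : μ ∈ S)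
    {y : ℕ} (hy : y ∈ S) : ∀ j : ℕ, y + j * μ ∈ S := by
  intro j
  induction j with
  | zero => simpa using hy
  | succ j ih =>
    have : y + j * μ + μ ∈ S := hadd _ ih μ hμS
    have h2 : y + (j + 1) * μ = y + j * μ + μ := by ring
    rw [h2]; exact this

lemma ordS_step {μ : ℕ} (hμS : μ ∈ S) (hμ0 : μ ≠ 0) {s : ℕ} (hs : s ∈ S) :
    ordS S s + 1 ≤ ordS S (s + μ) := by
  apply le_ordS
  exact Set.mem_add.mpr ⟨μ, ⟨hμS, by simpa using hμ0⟩, s, mem_nM_ordS hs, by ring⟩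

lemma ordS_iter_ge (hadd : ∀ a ∈ S, ∀ b ∈ S, a + b ∈ S)
    {μ : ℕ} (hμS : μ ∈ S) (hμ0 : μ ≠ 0) {s : ℕ} (hs : s ∈ S) :
    ∀ j : ℕ, ordS S s + j ≤ ordS S (s + j * μ) := by
  intro j
  induction j with
  | zero => simp
  | succ j ih =>
    have h1 : ordS S (s + j * μ) + 1 ≤ ordS S (s + j * μ + μ) :=
      ordS_step hμS hμ0 (mem_add_mul hadd hμS hs j)
    have h2 : s + (j + 1) * μ = s + j * μ + μ := by ring
    rw [h2]; omega

lemma ordS_cm_iter (hadd : ∀ a ∈ S, ∀ b ∈ S, a + b ∈ S)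
    {μ : ℕ} (hμS : μ ∈ S)
    (hCM : ∀ s ∈ S, ordS S (s + μ) = ordS S s + 1) {y : ℕ} (hy : y ∈ S) :
    ∀ j : ℕ, ordS S (y + j * μ) = ordS S y + j := by
  intro j
  induction j with
  | zero => simp
  | succ j ih =>
    have h1 := hCM (y + j * μ) (mem_add_mul hadd hμS hy j)
    have h2 : y + (j + 1) * μ = y + j * μ + μ := by ring
    rw [h2, h1, ih]; omega

lemma gen_min {d : ℕ} (hd : 0 < d) (m : Fin d → ℕ) (hm : Monotone m) {x : ℕ}
    (hx : x ∈ AddSubmonoid.closure (Set.range m)) : x = 0 ∨ m ⟨0, hd⟩ ≤ x := by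
  induction hx using AddSubmonoid.closure_induction with
  | mem y hy =>
    rcases hy with ⟨j, rfl⟩
    exact Or.inr (hm (Fin.le_def.mpr (Nat.zero_le _)))
  | zero => exact Or.inl rfl
  | add a b ha hb iha ihb => rcases iha with h | h <;> rcases ihb with h' | h' <;> omega

end Aux

/-- for a gluing `S` of `S₁` and `S₂`, the following are equivalent:
(1) `S` is a nice gluing and `G(S₂)` is Cohen–Macaulay
    (i.e. `ord_{S₂}(s + n₁) = ord_{S₂}(s) + 1` for all `s ∈ S₂`);
(2) `ord_{S₂}(q) ≤ ord_{S₁}(p)` and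
    `ord_{S₂}(y + αq) = ord_{S₂}(y) + α·ord_{S₂}(q)` for all `y ∈ S₂`, `α ≥ 0`. -/
theorem stmt7 (G : Gluing) :
    (G.Nice ∧ ∀ s ∈ G.S₂, ordS G.S₂ (s + G.n₁) = ordS G.S₂ s + 1) ↔
      (ordS G.S₂ G.q ≤ ordS G.S₁ G.p ∧
        ∀ y ∈ G.S₂, ∀ α : ℕ,
          ordS G.S₂ (y + α * G.q) = ordS G.S₂ y + α * ordS G.S₂ G.q) := by
  -- basic facts about S₂
  have h0 : (0 : ℕ) ∈ G.S₂ := (AddSubmonoid.closure (Set.range G.n)).zero_mem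
  have hadd : ∀ a ∈ G.S₂, ∀ b ∈ G.S₂, a + b ∈ G.S₂ :=
    fun a ha b hb => (AddSubmonoid.closure (Set.range G.n)).add_mem ha hb
  have hn₁S : G.n₁ ∈ G.S₂ :=
    AddSubmonoid.subset_closure ⟨⟨0, G.hk⟩, rfl⟩
  have hn₁0 : G.n₁ ≠ 0 := by
    intro h
    exact G.hmin₂ ⟨0, G.hk⟩ (by
      show G.n ⟨0, G.hk⟩ ∈ _
      have : G.n ⟨0, G.hk⟩ = 0 := h
      rw [this]; exact (AddSubmonoid.closure _).zero_mem)
  have hn₁min : ∀ x ∈ G.S₂, x ≠ 0 → G.n₁ ≤ x := fun x hx hx0 =>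
    (gen_min G.hk G.n G.hn.monotone hx).resolve_left hx0
  have hord0 : ordS G.S₂ 0 = 0 := ordS_zero h0
  have hq0 : G.q ≠ 0 := by
    intro h
    have hp1 : G.p = 1 := by
      have := G.hpq; rwa [h, Nat.gcd_zero_right] at this
    have hm₁0 : G.m ⟨0, G.hd⟩ ≠ 0 := by
      intro h'
      exact G.hmin₁ ⟨0, G.hd⟩ (by
        show G.m ⟨0, G.hd⟩ ∈ _
        rw [h']; exact (AddSubmonoid.closure _).zero_mem)
    have := (gen_min G.hd G.m G.hm.monotone G.hp).resolve_left (by omega)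
    exact G.hpm ⟨⟨0, G.hd⟩, by omega⟩
  constructor
  · rintro ⟨⟨a, ha1, hale, hq⟩, hCM⟩
    have hiter : ∀ y ∈ G.S₂, ∀ j : ℕ, ordS G.S₂ (y + j * G.n₁) = ordS G.S₂ y + j :=
      fun y hy => ordS_cm_iter hadd hn₁S hCM hy
    have hordq : ordS G.S₂ G.q = a := by
      have := hiter 0 h0 a
      rw [zero_add, hord0, zero_add] at this
      rw [hq]; exact this
    refine ⟨by rw [hordq]; exact hale, ?_⟩
    intro y hy α
    have h1 := hiter y hy (α * a)
    have h2 : y + α * G.q = y + α * a * G.n₁ := by rw [hq]; ring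
    rw [h2, h1, hordq]
  · rintro ⟨hle, hord⟩
    have hqS : G.q ∈ G.S₂ := G.hq
    set e := ordS G.S₂ G.q with he
    have he1 : 1 ≤ e := by
      apply le_ordS
      exact Set.mem_add.mpr ⟨G.q, ⟨hqS, by simpa using hq0⟩, 0, h0, by ring⟩
    have hlb : G.n₁ * e ≤ G.q := nM_lb hn₁min e G.q (mem_nM_ordS hqS)
    -- q = e * n₁
    have hqe : G.q = e * G.n₁ := by
      by_contra hne
      have h1 : e * G.n₁ < G.q :=
        lt_of_le_of_ne (by rw [Nat.mul_comm]; exact hlb) (fun h => hne h.symm)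
      obtain ⟨N, hN⟩ : ∃ N, ∀ x, N ≤ x → x ∈ G.S₂ := by
        obtain ⟨B, hB⟩ := (G.hnum₂.2.2).bddAbove
        refine ⟨B + 1, fun x hx => ?_⟩
        by_contra h
        have := hB h
        omega
      set α := N + G.n₁ with hα
      set P := α * (e * G.n₁) with hP
      have hAP : P + α ≤ α * G.q := by
        have : α * (e * G.n₁ + 1) ≤ α * G.q := Nat.mul_le_mul_left α h1
        calc P + α = α * (e * G.n₁ + 1) := by rw [hP]; ring
        _ ≤ α * G.q := this
      have hB : (α * e + 1) * G.n₁ = P + G.n₁ := by rw [hP]; ring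
      set y := α * G.q - (α * e + 1) * G.n₁ with hy
      have hBA : (α * e + 1) * G.n₁ ≤ α * G.q := by rw [hB]; omega
      have hrep : α * G.q = (α * e + 1) * G.n₁ + y := by omega
      have hyN : N ≤ y := by omega
      have hyS : y ∈ G.S₂ := hN y hyN
      have hmem : α * G.q ∈ nM G.S₂ (α * e + 1) := by
        rw [hrep]; exact rep_mem_nM hn₁S hn₁0 hyS (α * e + 1)
      have h2 := hord 0 h0 α
      rw [zero_add, hord0, zero_add] at h2
      have h3 : α * e + 1 ≤ ordS G.S₂ (α * G.q) := le_ordS hmem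
      rw [h2] at h3
      exact Nat.not_succ_le_self _ h3
    have he2 : 1 < e := by
      rcases Nat.lt_or_ge 1 e with h | h
      · exact h
      · exfalso
        have : e = 1 := by omega
        rw [this, one_mul] at hqe
        exact G.hqn ⟨⟨0, G.hk⟩, hqe.symm⟩
    refine ⟨⟨e, he2, hle, hqe⟩, ?_⟩
    intro s hs
    have hsn : s + G.n₁ ∈ G.S₂ := hadd s hs G.n₁ hn₁S
    have h3 : ordS G.S₂ (s + G.n₁) + (e - 1) ≤ ordS G.S₂ (s + G.n₁ + (e - 1) * G.n₁) :=
      ordS_iter_ge hadd hn₁S hn₁0 hsn (e - 1)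
    have h4 : s + G.n₁ + (e - 1) * G.n₁ = s + G.q := by
      have h' : (e - 1) + 1 = e := by omega
      calc s + G.n₁ + (e - 1) * G.n₁ = s + ((e - 1) + 1) * G.n₁ := by ring
      _ = s + e * G.n₁ := by rw [h']
      _ = s + G.q := by rw [hqe]
    have h5 := hord s hs 1
    rw [one_mul, one_mul] at h5
    rw [h4, h5] at h3
    have h6 : ordS G.S₂ s + 1 ≤ ordS G.S₂ (s + G.n₁) := ordS_step hn₁S hn₁0 hs
    omega
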